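/- Let p be a prime, z ∈ [1, p) an integer, and u ∈ [0, p) an integer. Then there exists a unique λ ∈ [0, p) such that Z = z + λp satisfies q_p(Z) ≡ u (mod p); moreover λ ≡ z·(q_p(z) − u) (mod p) and Z ≡ z^p − z·u·p (mod p²). Consequently, for each u, exactly p − 1 residues Z in [1, p²) coprime to p satisfy q_p(Z) ≡ u (mod p). -/

import Mathlib

private lemma binom_mod_sq (a b : ℤ) (n : ℕ) :
    (a + b) ^ n ≡ a ^ n + n * a ^ (n - 1) * b [ZMOD b ^ 2] := by
  induction n with
  | zero => simp
  | succ n ih =>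
    rcases Nat.eq_zero_or_pos n with rfl | hn
    · simp
    have h1 : (a + b) ^ (n + 1) = (a + b) ^ n * (a + b) := by ring
    have h2 : (a ^ n + n * a ^ (n - 1) * b) * (a + b)
        = a ^ (n + 1) + (n + 1) * a ^ n * b + (n * a ^ (n - 1)) * b ^ 2 := by
      have : a ^ (n - 1) * a = a ^ n := by
        rw [← pow_succ]; congr 1; omega
      push_cast
      linear_combination ((n : ℤ) * b) * this
    calc (a + b) ^ (n + 1) = (a + b) ^ n * (a + b) := h1
      _ ≡ (a ^ n + n * a ^ (n - 1) * b) * (a + b) [ZMOD b ^ 2] := ih.mul_right _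
      _ = a ^ (n + 1) + (n + 1) * a ^ n * b + (n * a ^ (n - 1)) * b ^ 2 := h2
      _ ≡ a ^ (n + 1) + (n + 1) * a ^ n * b + (n * a ^ (n - 1)) * 0 [ZMOD b ^ 2] := by
          exact Int.ModEq.add_left _ (Int.ModEq.mul_left _ (Int.modEq_zero_iff_dvd.mpr dvd_rfl))
      _ = a ^ (n + 1) + (n + 1) * a ^ n * b := by ring

private lemma fermat_dvd (p : ℕ) (hp : p.Prime) (z : ℤ) (hz : ¬(p:ℤ) ∣ z) :
    (p:ℤ) ∣ z ^ (p - 1) - 1 := by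
  haveI := Fact.mk hp
  have hz' : (z : ZMod p) ≠ 0 := by
    rwa [Ne, ZMod.intCast_zmod_eq_zero_iff_dvd]
  rw [← ZMod.intCast_zmod_eq_zero_iff_dvd]
  push_cast
  rw [sub_eq_zero]
  exact ZMod.pow_card_sub_one_eq_one hz'

private lemma div_modeq (p : ℕ) (hp : 0 < p) (d u : ℤ) (hd : (p:ℤ) ∣ d) :
    (d / p ≡ u [ZMOD p]) ↔ d ≡ u * p [ZMOD (p : ℤ) ^ 2] := by
  obtain ⟨e, rfl⟩ := hd
  have hp0 : (p : ℤ) ≠ 0 := by exact_mod_cast hp.ne'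
  rw [Int.mul_ediv_cancel_left _ hp0, Int.modEq_iff_dvd, Int.modEq_iff_dvd]
  constructor
  · rintro ⟨c, hc⟩
    exact ⟨c, by rw [sq]; linear_combination (p : ℤ) * hc⟩
  · rintro ⟨c, hc⟩
    refine ⟨c, by apply mul_left_cancel₀ hp0; rw [sq] at hc; linear_combination hc⟩

private lemma key (p : ℕ) (hp : p.Prime) (z u lam : ℤ) (hz : ¬ (p:ℤ) ∣ z) :
    (((z + lam * p) ^ (p - 1) - 1) / p ≡ u [ZMOD p]) ↔
      lam ≡ z * ((z ^ (p - 1) - 1) / p - u) [ZMOD p] := by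
  haveI := Fact.mk hp
  have hp0 : (0:ℤ) < p := by exact_mod_cast hp.pos
  have hpne : (p:ℤ) ≠ 0 := hp0.ne'
  set Z := z + lam * p with hZ
  have hp2 : 2 ≤ p := hp.two_le
  have hZz : Z ≡ z [ZMOD p] := Int.ModEq.symm (Int.modEq_iff_dvd.mpr ⟨lam, by rw [hZ]; ring⟩)
  have hzZ : ¬ (p:ℤ) ∣ Z := by
    intro h
    have h2 := Int.ModEq.dvd hZz
    exact hz (by have := dvd_add h2 h; simpa using this)
  have hfz : (p:ℤ) ∣ z ^ (p - 1) - 1 := fermat_dvd p hp z hz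
  have hfZ : (p:ℤ) ∣ Z ^ (p - 1) - 1 := fermat_dvd p hp Z hzZ
  set q : ℤ := (z ^ (p - 1) - 1) / p with hqdef
  have hq : (p:ℤ) * q = z ^ (p - 1) - 1 := Int.mul_ediv_cancel' hfz
  rw [div_modeq p hp.pos _ u hfZ]
  -- binomial
  have hbin : Z ^ (p - 1) ≡ z ^ (p - 1) + (p - 1 : ℕ) * z ^ (p - 1 - 1) * (lam * p)
      [ZMOD (p:ℤ) ^ 2] := by
    have := binom_mod_sq z (lam * p) (p - 1)
    exact (this.of_dvd (by exact ⟨lam ^ 2, by ring⟩))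
  have hexp : p - 1 - 1 = p - 2 := by omega
  rw [hexp] at hbin
  have step1 : (Z ^ (p - 1) - 1 ≡ u * p [ZMOD (p:ℤ)^2]) ↔
      ((p:ℤ) * q + (p - 1 : ℕ) * z ^ (p - 2) * (lam * p) ≡ u * p [ZMOD (p:ℤ)^2]) := by
    constructor
    · intro h
      calc (p:ℤ) * q + (p - 1 : ℕ) * z ^ (p - 2) * (lam * p)
          = z ^ (p - 1) + (p - 1 : ℕ) * z ^ (p - 2) * (lam * p) - 1 := by
            rw [hq]; ring
        _ ≡ Z ^ (p - 1) - 1 [ZMOD (p:ℤ)^2] := (hbin.symm).sub_right 1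
        _ ≡ u * p [ZMOD (p:ℤ)^2] := h
    · intro h
      calc Z ^ (p - 1) - 1 ≡ z ^ (p - 1) + (p - 1 : ℕ) * z ^ (p - 2) * (lam * p) - 1
            [ZMOD (p:ℤ)^2] := hbin.sub_right 1
        _ = (p:ℤ) * q + (p - 1 : ℕ) * z ^ (p - 2) * (lam * p) := by rw [hq]; ring
        _ ≡ u * p [ZMOD (p:ℤ)^2] := h
  rw [step1]
  -- divide out one p
  have step2 : ((p:ℤ) * q + (p - 1 : ℕ) * z ^ (p - 2) * (lam * p) ≡ u * p [ZMOD (p:ℤ)^2]) ↔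
      (q + (p - 1 : ℕ) * z ^ (p - 2) * lam ≡ u [ZMOD p]) := by
    rw [Int.modEq_iff_dvd, Int.modEq_iff_dvd]
    constructor
    · rintro ⟨c, hc⟩
      exact ⟨c, by apply mul_left_cancel₀ hpne; rw [sq] at hc; linear_combination hc⟩
    · rintro ⟨c, hc⟩
      exact ⟨c, by rw [sq]; linear_combination (p:ℤ) * hc⟩
  rw [step2]
  -- now pass to ZMod p
  rw [← ZMod.intCast_eq_intCast_iff, ← ZMod.intCast_eq_intCast_iff]
  push_cast
  set A : ZMod p := (z : ZMod p) with hA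
  have hA0 : A ≠ 0 := by rwa [hA, Ne, ZMod.intCast_zmod_eq_zero_iff_dvd]
  have hA1 : A ^ (p - 1) = 1 := ZMod.pow_card_sub_one_eq_one hA0
  have hAinv : A ^ (p - 2) * A = 1 := by
    rw [← pow_succ]
    rw [show p - 2 + 1 = p - 1 by omega]
    exact hA1
  have hpm1 : ((p - 1 : ℕ) : ZMod p) = -1 := by
    have : ((p - 1 : ℕ) : ZMod p) = (p : ZMod p) - 1 := by
      push_cast [Nat.cast_sub hp.one_le]; ring
    rw [this, ZMod.natCast_self]; ring
  rw [hpm1]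
  set Qv : ZMod p := (q : ZMod p)
  set L : ZMod p := (lam : ZMod p)
  set V : ZMod p := (u : ZMod p)
  constructor
  · intro h
    -- h : Qv + (-1) * A^(p-2) * L = V ; goal : L = A * (Qv - V)
    linear_combination (-A) * h - L * hAinv
  · intro h
    linear_combination (-(A ^ (p - 2))) * h - (Qv - V) * hAinv

private lemma third_iff (p : ℕ) (hp : p.Prime) (z u lam : ℤ) (hz : ¬(p:ℤ) ∣ z) :
    (z + lam * p ≡ z ^ p - z * u * p [ZMOD (p : ℤ) ^ 2]) ↔
      lam ≡ z * ((z ^ (p - 1) - 1) / p - u) [ZMOD p] := by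
  have hp2 : 2 ≤ p := hp.two_le
  have hp0 : (0:ℤ) < p := by exact_mod_cast hp.pos
  have hpne : (p:ℤ) ≠ 0 := hp0.ne'
  have hq : (p:ℤ) * ((z ^ (p - 1) - 1) / p) = z ^ (p - 1) - 1 :=
    Int.mul_ediv_cancel' (fermat_dvd p hp z hz)
  set q : ℤ := (z ^ (p - 1) - 1) / p with hqdef
  have hzp : z ^ p = z * z ^ (p - 1) := by
    rw [← pow_succ']
    congr 1
    omega
  rw [Int.modEq_iff_dvd, Int.modEq_iff_dvd]
  constructor
  · rintro ⟨c, hc⟩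
    refine ⟨c, ?_⟩
    apply mul_left_cancel₀ hpne
    linear_combination hc - hzp + z * hq
  · rintro ⟨c, hc⟩
    exact ⟨c, by linear_combination (p:ℤ) * hc + hzp - z * hq⟩


/-- For `p` prime, `z ∈ [1, p)` and `u ∈ [0, p)` there is a unique
`λ ∈ [0, p)` such that `Z = z + λ p` satisfies `q_p(Z) ≡ u (mod p)`;
moreover `λ ≡ z (q_p(z) - u) (mod p)` and `Z ≡ z^p - z u p (mod p²)`.
Consequently exactly `p - 1` residues `Z ∈ [1, p²)` coprime to `p` satisfy
`q_p(Z) ≡ u (mod p)`. -/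
theorem fermat_quotient_lift_unique
    (p : ℕ) (hp : p.Prime) (z u : ℤ) (hz1 : 1 ≤ z) (hzp : z < p)
    (hu0 : 0 ≤ u) (hup : u < p) :
    (∃! lam : ℤ, 0 ≤ lam ∧ lam < p ∧
        (((z + lam * p) ^ (p - 1) - 1) / p ≡ u [ZMOD p]) ∧
        (lam ≡ z * ((z ^ (p - 1) - 1) / p - u) [ZMOD p]) ∧
        (z + lam * p ≡ z ^ p - z * u * p [ZMOD (p : ℤ) ^ 2])) ∧
      {Z : ℕ | 1 ≤ Z ∧ Z < p ^ 2 ∧ Nat.Coprime Z p ∧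
        (((Z : ℤ) ^ (p - 1) - 1) / p ≡ u [ZMOD p])}.ncard = p - 1 := by
  have hp2 : 2 ≤ p := hp.two_le
  have hp0 : (0:ℤ) < p := by exact_mod_cast hp.pos
  have hpne : (p:ℤ) ≠ 0 := hp0.ne'
  have hz : ¬(p:ℤ) ∣ z := by
    intro h
    have := Int.le_of_dvd (by linarith) h
    linarith
  constructor
  · set q : ℤ := (z ^ (p - 1) - 1) / p with hqdef
    set lam0 : ℤ := (z * (q - u)) % p with hlam0
    have h0 : 0 ≤ lam0 := Int.emod_nonneg _ hpne
    have h1 : lam0 < p := Int.emod_lt_of_pos _ hp0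
    have hmod : lam0 ≡ z * (q - u) [ZMOD p] := Int.emod_emod_of_dvd _ dvd_rfl
    refine ⟨lam0, ⟨h0, h1, (key p hp z u lam0 hz).mpr hmod, hmod,
      (third_iff p hp z u lam0 hz).mpr hmod⟩, ?_⟩
    rintro y ⟨hy0, hyp, -, hy2, -⟩
    rw [← Int.emod_eq_of_lt hy0 hyp]
    exact hy2
  · set f : ℕ → ℕ :=
      fun a => a + ((a * (((a:ℤ) ^ (p - 1) - 1) / (p:ℤ) - u)) % p).toNat * p with hf
    have hfmod : ∀ a, a < p → f a % p = a := by
      intro a ha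
      simp only [hf]
      rw [Nat.add_mul_mod_self_right, Nat.mod_eq_of_lt ha]
    have hnd : ∀ a : ℕ, 1 ≤ a → a < p → ¬ (p:ℤ) ∣ (a:ℤ) := by
      intro a ha1 hap h
      have := Int.le_of_dvd (by exact_mod_cast ha1) h
      have : p ≤ a := by exact_mod_cast this
      omega
    have himg : {Z : ℕ | 1 ≤ Z ∧ Z < p ^ 2 ∧ Nat.Coprime Z p ∧
        (((Z : ℤ) ^ (p - 1) - 1) / p ≡ u [ZMOD p])} = f '' (Set.Ico 1 p) := by
      ext Z
      simp only [Set.mem_setOf_eq, Set.mem_image, Set.mem_Ico]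
      constructor
      · rintro ⟨hZ1, hZp2, hZcop, hZq⟩
        refine ⟨Z % p, ⟨?_, Nat.mod_lt _ hp.pos⟩, ?_⟩
        · have hnd2 : ¬ p ∣ Z := (hp.coprime_iff_not_dvd).mp hZcop.symm
          have : Z % p ≠ 0 := fun h => hnd2 (Nat.dvd_iff_mod_eq_zero.mpr h)
          omega
        · set a := Z % p with hadef
          set lam := Z / p with hlamdef
          have hZeq : a + lam * p = Z := Nat.mod_add_div' Z p
          have ha1 : 1 ≤ a := by
            have hnd2 : ¬ p ∣ Z := (hp.coprime_iff_not_dvd).mp hZcop.symm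
            have : a ≠ 0 := fun h => hnd2 (Nat.dvd_iff_mod_eq_zero.mpr h)
            omega
          have hap : a < p := Nat.mod_lt _ hp.pos
          have hlamp : lam < p := by
            apply Nat.div_lt_of_lt_mul
            calc Z < p ^ 2 := hZp2
              _ = p * p := sq p
          have hZcast : (Z:ℤ) = (a:ℤ) + (lam:ℤ) * p := by exact_mod_cast hZeq.symm
          rw [hZcast] at hZq
          have hkey := (key p hp (a:ℤ) u (lam:ℤ) (hnd a ha1 hap)).mp hZq
          set t : ℤ := ((a:ℤ) * (((a:ℤ) ^ (p - 1) - 1) / (p:ℤ) - u)) % p with htdef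
          have ht0 : 0 ≤ t := Int.emod_nonneg _ hpne
          have htp : t < p := Int.emod_lt_of_pos _ hp0
          have htmod : t ≡ (a:ℤ) * (((a:ℤ) ^ (p - 1) - 1) / (p:ℤ) - u) [ZMOD p] :=
            Int.emod_emod_of_dvd _ dvd_rfl
          have hlt : (lam:ℤ) = t := by
            have h := hkey.trans htmod.symm
            have : (lam:ℤ) % p = t % p := h
            rwa [Int.emod_eq_of_lt (by positivity) (by exact_mod_cast hlamp),
              Int.emod_eq_of_lt ht0 htp] at this
          have htoNat : t.toNat = lam := by
            rw [← hlt]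
            exact Int.toNat_natCast lam
          simp only [hf, htdef] at *
          rw [htoNat]
          exact hZeq
      · rintro ⟨a, ⟨ha1, hap⟩, rfl⟩
        set t : ℤ := ((a:ℤ) * (((a:ℤ) ^ (p - 1) - 1) / (p:ℤ) - u)) % p with htdef
        have ht0 : 0 ≤ t := Int.emod_nonneg _ hpne
        have htp : t < p := Int.emod_lt_of_pos _ hp0
        have htval : (t.toNat : ℤ) = t := Int.toNat_of_nonneg ht0
        have hkp : t.toNat < p := by
          have : (t.toNat : ℤ) < p := by rw [htval]; exact htp
          exact_mod_cast this
        have htmod : t ≡ (a:ℤ) * (((a:ℤ) ^ (p - 1) - 1) / (p:ℤ) - u) [ZMOD p] :=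
          Int.emod_emod_of_dvd _ dvd_rfl
        refine ⟨?_, ?_, ?_, ?_⟩
        · exact le_trans ha1 (Nat.le_add_right _ _)
        · calc f a = a + t.toNat * p := rfl
            _ < p + t.toNat * p := by omega
            _ = (t.toNat + 1) * p := by ring
            _ ≤ p * p := Nat.mul_le_mul_right p (by omega)
            _ = p ^ 2 := (sq p).symm
        · rw [Nat.coprime_comm]
          rw [hp.coprime_iff_not_dvd]
          intro hdvd
          have := Nat.dvd_iff_mod_eq_zero.mp hdvd
          rw [hfmod a hap] at this
          omega
        · have hcast : ((f a : ℕ) : ℤ) = (a:ℤ) + t * p := by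
            simp only [hf]
            rw [← htdef]
            push_cast [htval]
            ring
          rw [hcast]
          exact (key p hp (a:ℤ) u t (hnd a ha1 hap)).mpr htmod
    have hinj : Set.InjOn f (Set.Ico 1 p) := by
      intro a ha b hb hab
      have := congrArg (· % p) hab
      simpa [hfmod a ha.2, hfmod b hb.2] using this
    rw [himg, Set.ncard_image_of_injOn hinj, ← Finset.coe_Ico, Set.ncard_coe_finset,
      Nat.card_Ico]
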